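/- Let G be an abelian group and g ∈ G. Define M(G)(g) to be the subgroup of G generated by all elements μ(g,x) and μ(x,g) where μ ranges over all biadditive multiplications on G and x over G. Then the principal absolute ideal ⟨g⟩_AI equals ⟨g⟩ + M(G)(g), i.e., the subgroup generated by g together with M(G)(g). -/

import Mathlib

def IsAbsoluteIdeal {G : Type*} [AddCommGroup G] (A : AddSubgroup G) : Prop :=
  ∀ μ : G →+ G →+ G, ∀ a ∈ A, ∀ g : G, μ a g ∈ A ∧ μ g a ∈ A

def principalAI {G : Type*} [AddCommGroup G] (g : G) : AddSubgroup G :=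
  sInf {A : AddSubgroup G | IsAbsoluteIdeal A ∧ g ∈ A}

/-- `M(G)(g)`: the subgroup generated by all products `μ(g,x)` and `μ(x,g)`. -/
def MG {G : Type*} [AddCommGroup G] (g : G) : AddSubgroup G :=
  AddSubgroup.closure {y | ∃ (μ : G →+ G →+ G) (x : G), y = μ g x ∨ y = μ x g}

lemma MG_mul_left {G : Type*} [AddCommGroup G] (g : G) (μ : G →+ G →+ G)
    (a : G) (ha : a ∈ MG g) (x : G) : μ a x ∈ MG g := by
  induction ha using AddSubgroup.closure_induction with
  | mem y hy =>
      obtain ⟨μ', z, h | h⟩ := hy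
      · subst h
        exact AddSubgroup.subset_closure ⟨μ.comp (μ'.flip z), x, Or.inl rfl⟩
      · subst h
        exact AddSubgroup.subset_closure ⟨μ.comp (μ' z), x, Or.inl rfl⟩
  | zero => simpa using zero_mem (MG g)
  | add b c _ _ hb hc => simpa using add_mem hb hc
  | neg b _ hb => simpa using neg_mem hb

lemma MG_mul_g {G : Type*} [AddCommGroup G] (g : G) (μ : G →+ G →+ G) (x : G) :
    μ g x ∈ MG g ∧ μ x g ∈ MG g :=
  ⟨AddSubgroup.subset_closure ⟨μ, x, Or.inl rfl⟩,
   AddSubgroup.subset_closure ⟨μ, x, Or.inr rfl⟩⟩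

/-- The principal absolute ideal equals `⟨g⟩ + M(G)(g)`. -/
theorem principalAI_eq {G : Type*} [AddCommGroup G] (g : G) :
    principalAI g = AddSubgroup.zmultiples g ⊔ MG g := by
  apply le_antisymm
  · apply sInf_le
    constructor
    · intro μ a ha x
      obtain ⟨b, hb, c, hc, rfl⟩ := AddSubgroup.mem_sup.mp ha
      obtain ⟨n, rfl⟩ := AddSubgroup.mem_zmultiples_iff.mp hb
      have h1 : μ (n • g) x ∈ MG g := by
        have : μ (n • g) x = n • μ g x := by simp [map_zsmul]
        rw [this]
        exact zsmul_mem (MG_mul_g g μ x).1 n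
      have h2 : μ x (n • g) ∈ MG g := by
        have : μ x (n • g) = n • μ x g := by simp
        rw [this]
        exact zsmul_mem (MG_mul_g g μ x).2 n
      constructor
      · have : μ (n • g + c) x = μ (n • g) x + μ c x := by simp
        rw [this]
        exact AddSubgroup.mem_sup_right (add_mem h1 (MG_mul_left g μ c hc x))
      · have : μ x (n • g + c) = μ x (n • g) + μ x c := by simp
        rw [this]
        exact AddSubgroup.mem_sup_right (add_mem h2 (MG_mul_left g μ.flip c hc x))
    · exact AddSubgroup.mem_sup_left (AddSubgroup.mem_zmultiples g)
  · apply sup_le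
    · intro y hy
      obtain ⟨n, rfl⟩ := AddSubgroup.mem_zmultiples_iff.mp hy
      exact zsmul_mem (AddSubgroup.mem_sInf.mpr fun A hA => hA.2) n
    · rw [MG, AddSubgroup.closure_le]
      rintro y ⟨μ, x, h | h⟩ <;> subst h <;>
        exact AddSubgroup.mem_sInf.mpr fun A hA => by
          have := hA.1 μ g hA.2 x
          tauto
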